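/- arXiv:1301.1784 — 3 statements merged into one kernel-verified Lean document; each statement's English description precedes it below -/
import Mathlib

section
/- Let Θ be a compact convex subset of ℝ^d with positive Lebesgue volume. For each positive integer l, let A_l be a real diagonal matrix indexed by lΘ ∩ ℤ^d with diagonal entries a^{(l)}_{e,e} > 0 satisfying a^{(l)}_{e,e} ≤ 1 for all e ∈ lΘ ∩ ℤ^d, and let K_l = { (x_e) ∈ ℝ^{lΘ∩ℤ^d} : Σ_e a^{(l)}_{e,e} x_e² ≤ 1 }. Suppose there exist constants D₁, D₂ > 0 and a continuous function φ : Θ → ℝ such that |log(1/a^{(l)}_{e,e}) − l·φ(e/l)| ≤ D₁ log(l) + D₂ for every positive integer l and every e ∈ lΘ ∩ ℤ^d. Then the limit lim_{l→∞} log Card(K_l ∩ ℤ^{lΘ∩ℤ^d}) / l^{d+1} exists and equals (1/2) ∫_Θ φ(x) dx. -/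
open MeasureTheory Filter Pointwise


private lemma le_two_floor_add_one {s : ℝ} (hs : 0 ≤ s) : s ≤ 2 * (⌊s⌋ : ℝ) + 1 := by
  rcases le_or_gt 1 s with h | h
  · have h1 : s - 1 < (⌊s⌋ : ℝ) := Int.sub_one_lt_floor s
    linarith
  · have h0 : ⌊s⌋ = 0 := Int.floor_eq_zero_iff.mpr ⟨hs, h⟩
    rw [h0]; push_cast; linarith

private lemma int_abs_le_of_cast_abs_le {m : ℤ} {t : ℝ} (h : |(m : ℝ)| ≤ t) :
    -⌊t⌋ ≤ m ∧ m ≤ ⌊t⌋ := by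
  have h2 := abs_le.mp h
  constructor
  · have : (-m) ≤ ⌊t⌋ := Int.le_floor.mpr (by push_cast; linarith)
    omega
  · exact Int.le_floor.mpr h2.2

private lemma icc_card_cast (m : ℤ) (hm : 0 ≤ m) :
    ((Finset.Icc (-m) m).card : ℝ) = 2 * (m : ℝ) + 1 := by
  have h1 : (Finset.Icc (-m) m).card = (2 * m + 1).toNat := by
    rw [Int.card_Icc]; congr 1; ring
  rw [h1]
  have h2 : ((2 * m + 1).toNat : ℤ) = 2 * m + 1 := Int.toNat_of_nonneg (by omega)
  exact_mod_cast congrArg (Int.cast : ℤ → ℝ) h2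

section counting

variable {ι : Type*} [Fintype ι] [DecidableEq ι]

private lemma lattice_subset (a : ι → ℝ) (ha : ∀ e, 0 < a e) :
    {y : ι → ℤ | ∑ e, a e * ((y e : ℝ)) ^ 2 ≤ 1} ⊆
      ↑(Fintype.piFinset fun e => Finset.Icc (-⌊Real.sqrt (1 / a e)⌋) ⌊Real.sqrt (1 / a e)⌋) := by
  intro y hy
  simp only [Set.mem_setOf_eq] at hy
  simp only [Fintype.coe_piFinset, Set.mem_pi, Set.mem_univ, Finset.coe_Icc, Set.mem_Icc,
    forall_true_left]
  intro e
  have h1 : a e * ((y e : ℝ)) ^ 2 ≤ 1 :=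
    le_trans (Finset.single_le_sum (f := fun e => a e * ((y e : ℝ)) ^ 2)
      (fun i _ => mul_nonneg (ha i).le (sq_nonneg _)) (Finset.mem_univ e)) hy
  have h2 : ((y e : ℝ)) ^ 2 ≤ 1 / a e := by
    rw [le_div_iff₀ (ha e)]; linarith [mul_comm (a e) (((y e : ℝ)) ^ 2)]
  have h3 : |(y e : ℝ)| ≤ Real.sqrt (1 / a e) := by
    rw [← Real.sqrt_sq_eq_abs]
    exact Real.sqrt_le_sqrt h2
  exact int_abs_le_of_cast_abs_le h3

private lemma lattice_finite (a : ι → ℝ) (ha : ∀ e, 0 < a e) :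
    {y : ι → ℤ | ∑ e, a e * ((y e : ℝ)) ^ 2 ≤ 1}.Finite :=
  Set.Finite.subset (Finset.finite_toSet _) (lattice_subset a ha)

private lemma lattice_card_upper (a : ι → ℝ) (ha : ∀ e, 0 < a e) (ha1 : ∀ e, a e ≤ 1) :
    (Nat.card {y : ι → ℤ | ∑ e, a e * ((y e : ℝ)) ^ 2 ≤ 1} : ℝ) ≤
      ∏ e, (3 * Real.sqrt (1 / a e)) := by
  set t : ι → ℝ := fun e => Real.sqrt (1 / a e) with ht
  have htpos : ∀ e, 0 < t e := fun e => Real.sqrt_pos.mpr (div_pos one_pos (ha e))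
  have ht1 : ∀ e, 1 ≤ t e := fun e => by
    rw [ht]
    refine Real.one_le_sqrt.mpr ?_
    rw [le_div_iff₀ (ha e)]; simpa using ha1 e
  have hcard : Nat.card {y : ι → ℤ | ∑ e, a e * ((y e : ℝ)) ^ 2 ≤ 1} ≤
      (Fintype.piFinset fun e => Finset.Icc (-⌊t e⌋) ⌊t e⌋).card := by
    rw [Nat.card_coe_set_eq, ← Set.ncard_coe_finset]
    exact Set.ncard_le_ncard (lattice_subset a ha) (Finset.finite_toSet _)
  refine le_trans (Nat.cast_le.mpr hcard) ?_
  rw [Fintype.card_piFinset, Nat.cast_prod]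
  refine Finset.prod_le_prod (fun e _ => by positivity) (fun e _ => ?_)
  rw [icc_card_cast _ (Int.floor_nonneg.mpr (htpos e).le)]
  have h1 : (⌊t e⌋ : ℝ) ≤ t e := Int.floor_le _
  have h2 := ht1 e
  linarith

private lemma lattice_card_lower [Nonempty ι] (a : ι → ℝ) (ha : ∀ e, 0 < a e) :
    ∏ e, (Real.sqrt (1 / a e) / Real.sqrt (Fintype.card ι)) ≤
      (Nat.card {y : ι → ℤ | ∑ e, a e * ((y e : ℝ)) ^ 2 ≤ 1} : ℝ) := by
  set n : ℕ := Fintype.card ι with hn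
  have hnpos : 0 < n := Fintype.card_pos
  have hsn : 0 < Real.sqrt n := Real.sqrt_pos.mpr (by exact_mod_cast hnpos)
  set t : ι → ℝ := fun e => Real.sqrt (1 / a e) with ht
  have htpos : ∀ e, 0 < t e := fun e => Real.sqrt_pos.mpr (div_pos one_pos (ha e))
  set m : ι → ℤ := fun e => ⌊t e / Real.sqrt n⌋ with hm
  have hmnn : ∀ e, 0 ≤ m e := fun e => Int.floor_nonneg.mpr (div_pos (htpos e) hsn).le
  have hsub : ↑(Fintype.piFinset fun e => Finset.Icc (-(m e)) (m e)) ⊆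
      {y : ι → ℤ | ∑ e, a e * ((y e : ℝ)) ^ 2 ≤ 1} := by
    intro y hy
    simp only [Fintype.coe_piFinset, Set.mem_pi, Set.mem_univ, Finset.coe_Icc, Set.mem_Icc,
      forall_true_left] at hy
    simp only [Set.mem_setOf_eq]
    have hterm : ∀ e, a e * ((y e : ℝ)) ^ 2 ≤ 1 / n := by
      intro e
      have h1 : |(y e : ℝ)| ≤ t e / Real.sqrt n := by
        have := hy e
        have h2 : |(y e : ℝ)| ≤ (m e : ℝ) := by
          rw [abs_le]
          exact ⟨by exact_mod_cast this.1, by exact_mod_cast this.2⟩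
        exact h2.trans (Int.floor_le _)
      have h2 : ((y e : ℝ)) ^ 2 ≤ (t e / Real.sqrt n) ^ 2 := by
        rw [← sq_abs]
        exact pow_le_pow_left₀ (abs_nonneg _) h1 2
      have h3 : (t e / Real.sqrt n) ^ 2 = (1 / a e) / n := by
        rw [div_pow, ht, Real.sq_sqrt (div_pos one_pos (ha e)).le,
          Real.sq_sqrt (by positivity : (0:ℝ) ≤ (n:ℝ))]
      have hcancel : a e * (1 / a e) = 1 := mul_one_div_cancel (ha e).ne'
      calc a e * ((y e : ℝ)) ^ 2 ≤ a e * ((1 / a e) / n) := by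
            refine mul_le_mul_of_nonneg_left ?_ (ha e).le
            rw [h3] at h2; exact h2
        _ = (a e * (1 / a e)) / n := by ring
        _ = 1 / n := by rw [hcancel]
    calc ∑ e, a e * ((y e : ℝ)) ^ 2 ≤ ∑ _e : ι, (1:ℝ) / n :=
          Finset.sum_le_sum (fun e _ => hterm e)
      _ = 1 := by
          rw [Finset.sum_const, Finset.card_univ, nsmul_eq_mul, ← hn]
          field_simp
  have hcard : (Fintype.piFinset fun e => Finset.Icc (-(m e)) (m e)).card ≤
      Nat.card {y : ι → ℤ | ∑ e, a e * ((y e : ℝ)) ^ 2 ≤ 1} := by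
    rw [Nat.card_coe_set_eq, ← Set.ncard_coe_finset]
    exact Set.ncard_le_ncard hsub (lattice_finite a ha)
  refine le_trans ?_ (Nat.cast_le.mpr hcard)
  rw [Fintype.card_piFinset, Nat.cast_prod]
  refine Finset.prod_le_prod (fun e _ => (div_pos (htpos e) hsn).le) (fun e _ => ?_)
  rw [icc_card_cast _ (hmnn e)]
  exact le_two_floor_add_one (div_pos (htpos e) hsn).le

private lemma log_card_bounds (a : ι → ℝ) (ha : ∀ e, 0 < a e) (ha1 : ∀ e, a e ≤ 1) :
    |Real.log (Nat.card {y : ι → ℤ | ∑ e, a e * ((y e : ℝ)) ^ 2 ≤ 1}) -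
        (1 / 2) * ∑ e, Real.log (1 / a e)| ≤
      (Fintype.card ι : ℝ) * Real.log 3 +
        ((Fintype.card ι : ℝ) / 2) * Real.log (Fintype.card ι) := by
  cases isEmpty_or_nonempty ι with
  | inl h =>
    have h1 : {y : ι → ℤ | ∑ e, a e * ((y e : ℝ)) ^ 2 ≤ 1} = Set.univ := by
      ext y; simp
    rw [h1]
    simp [Nat.card_eq_fintype_card, Set.ncard_univ]
  | inr h =>
    set n : ℕ := Fintype.card ι with hn
    have hnpos : 0 < n := Fintype.card_pos
    have hn1 : (1:ℝ) ≤ n := by exact_mod_cast hnpos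
    have hsn : 0 < Real.sqrt n := Real.sqrt_pos.mpr (by linarith)
    set t : ι → ℝ := fun e => Real.sqrt (1 / a e) with ht
    have htpos : ∀ e, 0 < t e := fun e => Real.sqrt_pos.mpr (div_pos one_pos (ha e))
    set N : ℝ := (Nat.card {y : ι → ℤ | ∑ e, a e * ((y e : ℝ)) ^ 2 ≤ 1} : ℝ) with hN
    have hlow := lattice_card_lower a ha
    have hup := lattice_card_upper a ha ha1
    have hprodpos : 0 < ∏ e, (t e / Real.sqrt n) :=
      Finset.prod_pos (fun e _ => div_pos (htpos e) hsn)
    have hNpos : 0 < N := lt_of_lt_of_le hprodpos hlow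
    have hlogt : ∀ e, Real.log (t e) = (1 / 2) * Real.log (1 / a e) := by
      intro e
      rw [ht, Real.log_sqrt (div_pos one_pos (ha e)).le]; ring
    have h1 : (1/2 : ℝ) * ∑ e, Real.log (1 / a e) - (n / 2) * Real.log n ≤ Real.log N := by
      have := Real.log_le_log hprodpos hlow
      rw [Real.log_prod (fun e _ => (div_pos (htpos e) hsn).ne')] at this
      have heq : ∑ e, Real.log (t e / Real.sqrt n)
          = ∑ e, ((1/2) * Real.log (1 / a e) - (1/2) * Real.log n) := by
        refine Finset.sum_congr rfl (fun e _ => ?_)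
        rw [Real.log_div (htpos e).ne' hsn.ne', hlogt e,
          Real.log_sqrt (by positivity)]; ring
      rw [heq, Finset.sum_sub_distrib, Finset.sum_const, Finset.card_univ, ← hn,
        nsmul_eq_mul, ← Finset.mul_sum] at this
      have hring : (n:ℝ) * (1/2 * Real.log n) = (n / 2) * Real.log n := by ring
      rw [hring] at this
      linarith
    have h2 : Real.log N ≤ (1/2 : ℝ) * ∑ e, Real.log (1 / a e) + n * Real.log 3 := by
      have hppos : 0 < ∏ e, (3 * t e) :=
        Finset.prod_pos (fun e _ => mul_pos (by norm_num) (htpos e))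
      have := Real.log_le_log hNpos hup
      rw [Real.log_prod (fun e _ => (mul_pos (by norm_num : (0:ℝ) < 3) (htpos e)).ne')] at this
      have heq : ∑ e, Real.log (3 * t e)
          = ∑ e, (Real.log 3 + (1/2) * Real.log (1 / a e)) := by
        refine Finset.sum_congr rfl (fun e _ => ?_)
        rw [Real.log_mul (by norm_num) (htpos e).ne', hlogt e]
      rw [heq, Finset.sum_add_distrib, Finset.sum_const, Finset.card_univ, ← hn,
        nsmul_eq_mul, ← Finset.mul_sum] at this
      linarith
    have hlog3 : 0 ≤ Real.log 3 := Real.log_nonneg (by norm_num)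
    have hlogn : 0 ≤ Real.log n := Real.log_nonneg hn1
    rw [abs_le]
    constructor
    · have : 0 ≤ (n:ℝ) * Real.log 3 := by positivity
      nlinarith
    · nlinarith

end counting
section riemann

open scoped Topology

open BoxIntegral BoxIntegral.unitPartition

private lemma riemann_tendsto {d : ℕ} (Θ : Set (Fin d → ℝ)) (hconv : Convex ℝ Θ)
    (hcomp : IsCompact Θ) (ψ : (Fin d → ℝ) → ℝ) (hψ : Continuous ψ) :
    Tendsto (fun l : ℕ =>
        (∑ᶠ e : Fin d → ℤ, Set.indicator Θ ψ (fun i => (e i : ℝ) / l)) / (l : ℝ) ^ d)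
      atTop (𝓝 (∫ x in Θ, ψ x)) := by
  classical
  have hΘmeas : MeasurableSet Θ := hcomp.isClosed.measurableSet
  obtain ⟨C, hC⟩ := Bornology.IsBounded.exists_norm_le hcomp.isBounded
  set R : ℝ := max C 1 with hRdef
  have hR1 : (1:ℝ) ≤ R := le_max_right _ _
  have hRb : ∀ x ∈ Θ, ∀ i, |x i| ≤ R := by
    intro x hx i
    calc |x i| = ‖x i‖ := (Real.norm_eq_abs _).symm
      _ ≤ ‖x‖ := norm_le_pi_norm x i
      _ ≤ C := hC x hx
      _ ≤ R := le_max_left _ _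
  set N : ℕ := ⌈R⌉₊ + 2 with hNdef
  have hRN : R + 1 ≤ (N : ℝ) := by
    have := Nat.le_ceil R
    push_cast [hNdef]
    linarith
  have hNpos : (0:ℝ) < N := by linarith
  set B : Box (Fin d) := ⟨fun _ => -(N:ℝ), fun _ => (N:ℝ), fun i => by show -(N:ℝ) < (N:ℝ); linarith⟩ with hBdef
  have hBint : BoxIntegral.hasIntegralVertices B :=
    ⟨fun _ => -(N:ℤ), fun _ => (N:ℤ), fun i => by push_cast; rfl, fun i => by push_cast; rfl⟩
  have hΘB : Θ ⊆ ↑B := by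
    intro x hx
    rw [Box.mem_coe, Box.mem_def]
    intro i
    have := abs_le.mp (hRb x hx i)
    exact ⟨by simp only [hBdef]; linarith, by simp only [hBdef]; linarith⟩
  set F : (Fin d → ℝ) → ℝ := Set.indicator Θ ψ with hFdef
  -- a.e. continuity of F
  have hFae : ∀ᵐ x, ContinuousAt F x := by
    have hfr : volume (frontier Θ) = 0 := hconv.addHaar_frontier volume
    rw [ae_iff]
    refine measure_mono_null (fun x hx => ?_) hfr
    simp only [Set.mem_setOf_eq] at hx
    by_contra hxf
    apply hx
    have hx' : x ∈ interior Θ ∨ x ∉ closure Θ := by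
      by_contra hcon
      push_neg at hcon
      exact hxf ⟨hcon.2, fun h => hcon.1 h⟩
    rcases hx' with h | h
    · refine hψ.continuousAt.congr ?_
      filter_upwards [isOpen_interior.mem_nhds h] with y hy
      exact (Set.indicator_of_mem (interior_subset hy) ψ).symm
    · refine continuousAt_const.congr (f := fun _ => (0:ℝ)) ?_
      filter_upwards [isOpen_compl_iff.mpr isClosed_closure |>.mem_nhds h] with y hy
      exact (Set.indicator_of_notMem (fun hmem => hy (subset_closure hmem)) ψ).symm
  -- bound
  obtain ⟨M, hM⟩ := B.isCompact_Icc.exists_bound_of_continuousOn hψ.continuousOn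
  have hFb : ∀ x ∈ Box.Icc B, ‖F x‖ ≤ max M 0 := by
    intro x hx
    by_cases h : x ∈ Θ
    · rw [hFdef, Set.indicator_of_mem h]
      exact le_trans (hM x hx) (le_max_left _ _)
    · rw [hFdef, Set.indicator_of_notMem h]
      simp
  have hInt : HasIntegral B .Riemann F volume.toBoxAdditive.toSMul (∫ x in Θ, ψ x) := by
    have h1 := MeasureTheory.AEContinuous.hasBoxIntegral (μ := volume) (I := B)
      ⟨max M 0, hFb⟩ hFae .Riemann
    have h2 : ∫ x in (B : Set (Fin d → ℝ)), F x = ∫ x in Θ, ψ x := by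
      rw [hFdef, setIntegral_indicator hΘmeas, Set.inter_eq_right.mpr hΘB]
    rwa [h2] at h1
  rw [Metric.tendsto_atTop]
  intro ε hε
  obtain ⟨r, hr, Hr⟩ := BoxIntegral.hasIntegral_iff.mp hInt (ε/2) (half_pos hε)
  set ρ : ℝ := (r 1 0 : ℝ) with hρdef
  have hρ : 0 < ρ := (r 1 0).2
  obtain ⟨n₀, hn₀⟩ := exists_nat_gt (1/ρ)
  have hn₀pos : 0 < (n₀ : ℝ) := lt_trans (by positivity) hn₀
  refine ⟨max 1 n₀, fun l hl => ?_⟩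
  have hl1 : 1 ≤ l := le_trans (le_max_left _ _) hl
  have hlR : (1:ℝ) ≤ (l:ℝ) := by exact_mod_cast hl1
  have hlpos : (0:ℝ) < l := by linarith
  haveI : NeZero l := ⟨by omega⟩
  have hlρ : 1 / (l:ℝ) ≤ ρ := by
    have h1 : (n₀:ℝ) ≤ l := Nat.cast_le.mpr (le_trans (le_max_right _ _) hl)
    have h2 : 1/(l:ℝ) ≤ 1/(n₀:ℝ) := by
      apply one_div_le_one_div_of_le hn₀pos h1
    have h3 : 1/(n₀:ℝ) < ρ := by
      rw [div_lt_iff₀ hn₀pos]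
      rw [div_lt_iff₀ hρ] at hn₀
      linarith [hn₀]
    linarith
  have hrconst : ∀ x, r 1 x = r 1 0 := hr 1 rfl
  have hreq : r 1 = fun _ => (⟨ρ, hρ⟩ : Set.Ioi (0:ℝ)) := by
    funext x
    exact Subtype.ext (congrArg Subtype.val (hrconst x))
  have hmem : IntegrationParams.MemBaseSet .Riemann B 1 (r 1)
      (BoxIntegral.unitPartition.prepartition (ι := Fin d) l B) := by
    refine ⟨?_, fun _ => prepartition_isHenstock l B, fun h => ?_, fun h => ?_⟩
    · rw [hreq]
      exact prepartition_isSubordinate l B hρ hlρ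
    · exact absurd h (by norm_num [IntegrationParams.Riemann])
    · exact absurd h (by norm_num [IntegrationParams.Riemann])
  have hpart : (BoxIntegral.unitPartition.prepartition (ι := Fin d) l B).IsPartition :=
    prepartition_isPartition l hBint
  have key := Hr 1 _ hmem hpart
  -- compute the integral sum
  have hvol : ∀ ν : Fin d → ℤ, (volume.toBoxAdditive.toSMul (box l ν)) (F (tag l ν))
      = (1 / (l:ℝ)^d) * F (tag l ν) := by
    intro ν
    show volume.toBoxAdditive (box l ν) • F (tag l ν) = _
    rw [Measure.toBoxAdditive_apply, measureReal_def, volume_box, smul_eq_mul]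
    congr 1
    rw [ENNReal.toReal_div, ENNReal.toReal_one, ENNReal.toReal_pow, ENNReal.toReal_natCast,
      Fintype.card_fin]
  have h0 : integralSum F volume.toBoxAdditive.toSMul (prepartition l B)
      = ∑ ν ∈ admissibleIndex l B, (1 / (l:ℝ)^d) * F (tag l ν) := by
    calc integralSum F volume.toBoxAdditive.toSMul (prepartition l B)
        = ∑ J ∈ (prepartition l B).boxes,
            volume.toBoxAdditive.toSMul J (F ((prepartition l B).tag J)) := rfl
      _ = ∑ ν ∈ admissibleIndex l B, volume.toBoxAdditive.toSMul (box l ν)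
            (F ((prepartition l B).tag (box l ν))) :=
          Finset.sum_image (fun a _ b _ h => box_injective l h)
      _ = ∑ ν ∈ admissibleIndex l B, (1 / (l:ℝ)^d) * F (tag l ν) := by
          refine Finset.sum_congr rfl fun ν hν => ?_
          rw [prepartition_tag l hν, hvol ν]
  have h1 : ∑ᶠ e : Fin d → ℤ, F (fun i => (e i : ℝ) / l)
      = ∑ ν ∈ admissibleIndex l B, F (tag l ν) := by
    have h1l : 1 / (l:ℝ) ≤ 1 := by rw [div_le_one hlpos]; exact hlR
    have h1l0 : 0 < 1 / (l:ℝ) := by positivity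
    have hsupp : (Function.support fun e : Fin d → ℤ => F (fun i => (e i : ℝ) / l))
        ⊆ ↑((admissibleIndex l B).image (fun ν => ν + 1)) := by
      intro e he
      have hΘe : (fun i => (e i : ℝ) / l) ∈ Θ := by
        by_contra h
        exact he (Set.indicator_of_notMem h ψ)
      refine Finset.mem_coe.mpr (Finset.mem_image.mpr ⟨e - 1, ?_, by ring⟩)
      rw [mem_admissibleIndex_iff, Box.le_iff_bounds]
      constructor
      · refine Pi.le_def.mpr fun i => ?_
        have hri := abs_le.mp (hRb _ hΘe i)
        show -(N:ℝ) ≤ (((e - 1) i : ℤ) : ℝ) / l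
        have hcast : (((e - 1) i : ℤ) : ℝ) = (e i : ℝ) - 1 := by
          push_cast [Pi.sub_apply, Pi.one_apply]; ring
        rw [hcast, sub_div]
        linarith [hri.1]
      · refine Pi.le_def.mpr fun i => ?_
        have hri := abs_le.mp (hRb _ hΘe i)
        show ((((e - 1) i : ℤ) : ℝ) + 1) / l ≤ (N:ℝ)
        have hcast : ((((e - 1) i : ℤ) : ℝ) + 1) = (e i : ℝ) := by
          push_cast [Pi.sub_apply, Pi.one_apply]; ring
        rw [hcast]
        linarith [hri.2]
    rw [finsum_eq_finset_sum_of_support_subset _ hsupp,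
      Finset.sum_image (fun a _ b _ h => add_left_injective 1 h)]
    refine Finset.sum_congr rfl fun ν _ => ?_
    congr 1
    funext i
    rw [tag_apply]
    push_cast [Pi.add_apply, Pi.one_apply]
    ring
  have hsum : integralSum F volume.toBoxAdditive.toSMul (prepartition l B)
      = (∑ᶠ e : Fin d → ℤ, F (fun i => (e i : ℝ) / l)) / (l : ℝ) ^ d := by
    rw [h0, ← Finset.mul_sum, ← h1, one_div, inv_mul_eq_div]
  rw [hsum] at key
  exact lt_of_le_of_lt key (by linarith)

end riemann
set_option maxHeartbeats 1600000

/-- Moriwaki's counting lemma (equality, diagonal case): if `Θ ⊆ ℝ^d` is compact convex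
with positive volume, `A_l` is a diagonal matrix indexed by the lattice points of `lΘ`
with positive diagonal entries `a_{e,e} ≤ 1` satisfying
`|log(1/a_{e,e}) - l φ(e/l)| ≤ D₁ log l + D₂` for a continuous `φ : Θ → ℝ`, and `K_l`
is the associated unit ellipsoid, then
`lim_{l} log Card(K_l ∩ ℤ^{lΘ∩ℤ^d}) / l^{d+1} = (1/2) ∫_Θ φ`. -/
theorem tendsto_log_card_diagonal_ellipsoid_lattice_points
    {d : ℕ} (Θ : Set (Fin d → ℝ))
    (hconv : Convex ℝ Θ) (hcomp : IsCompact Θ) (hvol : 0 < volume Θ)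
    (S : ℕ → Set (Fin d → ℤ))
    (hS : ∀ l : ℕ, S l = {e : Fin d → ℤ | (fun i => (e i : ℝ)) ∈ (l : ℝ) • Θ})
    (a : ∀ l : ℕ, S l → ℝ)
    (hpos : ∀ l : ℕ, 1 ≤ l → ∀ e : S l, 0 < a l e)
    (hle : ∀ l : ℕ, 1 ≤ l → ∀ e : S l, a l e ≤ 1)
    (φ : (Fin d → ℝ) → ℝ) (hφ : ContinuousOn φ Θ)
    (D₁ D₂ : ℝ) (hD₁ : 0 < D₁) (hD₂ : 0 < D₂)
    (hbound : ∀ l : ℕ, 1 ≤ l → ∀ e : S l,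
      |Real.log (1 / a l e) - l * φ (fun i => (e.1 i : ℝ) / l)| ≤
        D₁ * Real.log l + D₂)
    (K : ∀ l : ℕ, Set (S l → ℝ))
    (hK : ∀ l : ℕ, K l = {x : S l → ℝ | ∑ᶠ e : S l, a l e * (x e) ^ 2 ≤ 1}) :
    Tendsto (fun l : ℕ =>
        Real.log (Nat.card {x : S l → ℝ // x ∈ K l ∧ ∀ e : S l, ∃ n : ℤ, x e = (n : ℝ)}) /
          (l : ℝ) ^ (d + 1)) atTop
      (nhds ((1 / 2) * ∫ x in Θ, φ x)) := by
  classical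
  have hΘmeas : MeasurableSet Θ := hcomp.isClosed.measurableSet
  obtain ⟨C, hC⟩ := Bornology.IsBounded.exists_norm_le hcomp.isBounded
  set R : ℝ := max C 1 with hRdef
  have hR1 : (1:ℝ) ≤ R := le_max_right _ _
  have hRb : ∀ x ∈ Θ, ∀ i, |x i| ≤ R := by
    intro x hx i
    calc |x i| = ‖x i‖ := (Real.norm_eq_abs _).symm
      _ ≤ ‖x‖ := norm_le_pi_norm x i
      _ ≤ C := hC x hx
      _ ≤ R := le_max_left _ _
  -- continuous extension of φ
  obtain ⟨g, hg⟩ := ContinuousMap.exists_restrict_eq (Y := ℝ) hcomp.isClosed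
    ⟨Θ.restrict φ, continuousOn_iff_continuous_restrict.mp hφ⟩
  have hgΘ : ∀ x, x ∈ Θ → g x = φ x := fun x hx =>
    congrFun (congrArg DFunLike.coe hg) ⟨x, hx⟩
  -- membership criterion
  have hmem : ∀ l : ℕ, 1 ≤ l → ∀ e : Fin d → ℤ,
      (e ∈ S l ↔ (fun i => (e i : ℝ) / l) ∈ Θ) := by
    intro l hl e
    have hl0 : ((l:ℝ)) ≠ 0 := Nat.cast_ne_zero.mpr (by omega)
    rw [hS l, Set.mem_setOf_eq, Set.mem_smul_set_iff_inv_smul_mem₀ hl0]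
    have hfn : (l:ℝ)⁻¹ • (fun i => (e i : ℝ)) = fun i => (e i : ℝ) / l := by
      funext i
      simp [div_eq_inv_mul]
    rw [hfn]
  have hcoord : ∀ l : ℕ, 1 ≤ l → ∀ e ∈ S l, ∀ i, |(e i : ℝ)| ≤ R * l := by
    intro l hl e he i
    have hl0 : (0:ℝ) < l := by exact_mod_cast (by omega : 0 < l)
    have h1 := hRb _ ((hmem l hl e).mp he) i
    have h2 : |(e i : ℝ)| / (l:ℝ) ≤ R := by
      rw [← abs_of_pos hl0, ← abs_div]
      exact h1
    calc |(e i : ℝ)| = |(e i : ℝ)| / (l:ℝ) * l := by field_simp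
      _ ≤ R * l := mul_le_mul_of_nonneg_right h2 hl0.le
  have hSsub : ∀ l : ℕ, 1 ≤ l → S l ⊆
      ↑(Fintype.piFinset fun _ : Fin d => Finset.Icc (-⌈R * l⌉) ⌈R * l⌉) := by
    intro l hl e he
    simp only [Fintype.coe_piFinset, Set.mem_pi, Set.mem_univ, Finset.coe_Icc, Set.mem_Icc,
      forall_true_left]
    intro i
    have h := abs_le.mp ((hcoord l hl e he i).trans (Int.le_ceil _))
    exact ⟨by exact_mod_cast h.1, by exact_mod_cast h.2⟩
  have hfin : ∀ l : ℕ, 1 ≤ l → (S l).Finite := fun l hl =>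
    Set.Finite.subset (Finset.finite_toSet _) (hSsub l hl)
  set c : ℝ := (5 * R) ^ d with hcdef
  have hc1 : (1:ℝ) ≤ c := one_le_pow₀ (by linarith)
  have hncard : ∀ l : ℕ, 1 ≤ l → ((S l).ncard : ℝ) ≤ c * (l:ℝ) ^ d := by
    intro l hl
    have hlR : (1:ℝ) ≤ (l:ℝ) := by exact_mod_cast hl
    have h1 : (S l).ncard ≤
        (Fintype.piFinset fun _ : Fin d => Finset.Icc (-⌈R * l⌉) ⌈R * l⌉).card := by
      rw [← Set.ncard_coe_finset]
      exact Set.ncard_le_ncard (hSsub l hl) (Finset.finite_toSet _)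
    refine le_trans (Nat.cast_le.mpr h1) ?_
    have hceilnn : 0 ≤ ⌈R * (l:ℝ)⌉ := Int.ceil_nonneg (by positivity)
    rw [Fintype.card_piFinset, Finset.prod_const, Finset.card_univ, Fintype.card_fin,
      Nat.cast_pow, hcdef, ← mul_pow]
    refine pow_le_pow_left₀ (Nat.cast_nonneg _) ?_ d
    rw [icc_card_cast _ hceilnn]
    have h2 : (⌈R * (l:ℝ)⌉ : ℝ) < R * l + 1 := Int.ceil_lt_add_one _
    have h3 : (1:ℝ) ≤ R * l := by nlinarith
    nlinarith
  -- sequences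
  set f : ℕ → ℝ := fun l : ℕ =>
    Real.log (Nat.card {x : S l → ℝ // x ∈ K l ∧ ∀ e : S l, ∃ n : ℤ, x e = (n : ℝ)}) /
      (l : ℝ) ^ (d + 1) with hfdef
  set A : ℕ → ℝ := fun l => ∑ᶠ e : S l, φ (fun i => (e.1 i : ℝ) / l) with hAdef
  set u : ℕ → ℝ := fun l => (1/2) * (A l / (l:ℝ) ^ d) with hudef
  set β₁ : ℝ := Real.log 3 + Real.log c / 2 + D₂ / 2 with hβ₁def
  set β₂ : ℝ := (d:ℝ)/2 + D₁/2 with hβ₂def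
  have hlog3 : 0 ≤ Real.log 3 := Real.log_nonneg (by norm_num)
  have hlogc : 0 ≤ Real.log c := Real.log_nonneg hc1
  have hβ₁nn : 0 ≤ β₁ := by rw [hβ₁def]; positivity
  have hβ₂nn : 0 ≤ β₂ := by rw [hβ₂def]; positivity
  set b : ℕ → ℝ := fun l => (c * (β₁ + β₂ * Real.log l)) / l with hbdef
  -- limit of u
  have hu : Tendsto u atTop (nhds ((1 / 2) * ∫ x in Θ, φ x)) := by
    have hRt := riemann_tendsto Θ hconv hcomp g g.continuous
    have hint : ∫ x in Θ, g x = ∫ x in Θ, φ x :=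
      setIntegral_congr_fun hΘmeas (fun x hx => hgΘ x hx)
    rw [hint] at hRt
    have hAeq : ∀ᶠ l : ℕ in atTop,
        (∑ᶠ e : Fin d → ℤ, Set.indicator Θ (⇑g) (fun i => (e i : ℝ) / l)) / (l:ℝ) ^ d
          = A l / (l:ℝ) ^ d := by
      filter_upwards [eventually_ge_atTop 1] with l hl
      congr 1
      have h1 : (∑ᶠ e : ↥(S l), φ (fun i => (e.1 i : ℝ) / l))
          = ∑ᶠ e ∈ S l, φ (fun i => (e i : ℝ) / l) :=
        finsum_set_coe_eq_finsum_mem (f := fun e : Fin d → ℤ => φ fun i => (e i : ℝ) / l) (S l)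
      rw [hAdef]
      beta_reduce
      rw [h1, finsum_mem_def]
      refine finsum_congr fun e => ?_
      by_cases he : e ∈ S l
      · rw [Set.indicator_of_mem he, Set.indicator_of_mem ((hmem l hl e).mp he)]
        exact hgΘ _ ((hmem l hl e).mp he)
      · rw [Set.indicator_of_notMem he,
          Set.indicator_of_notMem (fun h => he ((hmem l hl e).mpr h))]
    exact (hRt.congr' hAeq).const_mul (1/2)
  -- main bound
  have hfu : ∀ᶠ l : ℕ in atTop, ‖f l - u l‖ ≤ b l := by
    filter_upwards [eventually_ge_atTop 1] with l hl
    haveI : Fintype ↥(S l) := (hfin l hl).fintype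
    have hlR : (1:ℝ) ≤ (l:ℝ) := by exact_mod_cast hl
    have hlpos : (0:ℝ) < l := by linarith
    set n : ℕ := Fintype.card ↥(S l) with hndef
    set L : ℝ := Real.log (Nat.card {y : ↥(S l) → ℤ | ∑ e, a l e * ((y e : ℝ)) ^ 2 ≤ 1})
      with hLdef
    have hcardEq : Nat.card {x : S l → ℝ // x ∈ K l ∧ ∀ e : S l, ∃ n : ℤ, x e = (n : ℝ)}
        = Nat.card {y : ↥(S l) → ℤ | ∑ e, a l e * ((y e : ℝ)) ^ 2 ≤ 1} := by
      have hKmem : ∀ z : ↥(S l) → ℝ, (∑ᶠ e : ↥(S l), a l e * (z e) ^ 2 ≤ 1) → z ∈ K l := by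
        intro z hz
        rw [hK l]
        exact hz
      have hval : ∀ y : {y : ↥(S l) → ℤ | ∑ e, a l e * ((y e : ℝ)) ^ 2 ≤ 1},
          (fun e => ((y.1 e : ℤ) : ℝ)) ∈ K l ∧
            ∀ e : ↥(S l), ∃ m : ℤ, ((y.1 e : ℤ) : ℝ) = (m : ℝ) := by
        intro y
        refine ⟨hKmem _ ?_, fun e => ⟨y.1 e, rfl⟩⟩
        rw [finsum_eq_sum_of_fintype]
        exact y.2
      have hFbij : Function.Bijective
          (fun y : {y : ↥(S l) → ℤ | ∑ e, a l e * ((y e : ℝ)) ^ 2 ≤ 1} =>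
            (⟨fun e => ((y.1 e : ℤ) : ℝ), hval y⟩ :
              {x : ↥(S l) → ℝ // x ∈ K l ∧ ∀ e : ↥(S l), ∃ n : ℤ, x e = (n : ℝ)})) := by
        constructor
        · intro y₁ y₂ hy
          apply Subtype.ext; funext e
          have h0 : ((y₁.1 e : ℤ) : ℝ) = ((y₂.1 e : ℤ) : ℝ) :=
            congrFun (congrArg Subtype.val hy) e
          exact_mod_cast h0
        · rintro ⟨x, hx1, hx2⟩
          have hxval : ∀ e, x e = (((hx2 e).choose : ℤ) : ℝ) := fun e => (hx2 e).choose_spec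
          have hychoose : (fun e => (hx2 e).choose) ∈
              {y : ↥(S l) → ℤ | ∑ e, a l e * ((y e : ℝ)) ^ 2 ≤ 1} := by
            rw [hK l] at hx1
            replace hx1 : ∑ᶠ e : ↥(S l), a l e * (x e) ^ 2 ≤ 1 := hx1
            rw [finsum_eq_sum_of_fintype] at hx1
            show ∑ e, a l e * ((((hx2 e).choose : ℤ) : ℝ)) ^ 2 ≤ 1
            refine le_trans (le_of_eq (Finset.sum_congr rfl fun e _ => ?_)) hx1
            rw [← hxval e]
          refine ⟨⟨fun e => (hx2 e).choose, hychoose⟩, ?_⟩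
          apply Subtype.ext; funext e
          exact (hxval e).symm
      exact (Nat.card_eq_of_bijective _ hFbij).symm
    have hlog := log_card_bounds (a l) (hpos l hl) (hle l hl)
    rw [← hndef, ← hLdef] at hlog
    have hAfin : A l = ∑ e : ↥(S l), φ (fun i => (e.1 i : ℝ) / l) := by
      rw [hAdef]
      exact finsum_eq_sum_of_fintype _
    have habs : |(∑ e : ↥(S l), Real.log (1 / a l e)) - (l:ℝ) * A l|
        ≤ (n:ℝ) * (D₁ * Real.log l + D₂) := by
      rw [hAfin, Finset.mul_sum, ← Finset.sum_sub_distrib]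
      refine le_trans (Finset.abs_sum_le_sum_abs _ _) ?_
      refine le_trans (Finset.sum_le_sum (fun e _ => hbound l hl e)) ?_
      rw [Finset.sum_const, Finset.card_univ, nsmul_eq_mul, hndef]
    have hcomb : |L - (1/2) * ((l:ℝ) * A l)|
        ≤ (n:ℝ) * Real.log 3 + ((n:ℝ)/2) * Real.log n
          + (1/2) * ((n:ℝ) * (D₁ * Real.log l + D₂)) := by
      have hid : L - (1/2) * ((l:ℝ) * A l)
          = (L - (1/2) * ∑ e : ↥(S l), Real.log (1 / a l e))
            + (1/2) * ((∑ e : ↥(S l), Real.log (1 / a l e)) - (l:ℝ) * A l) := by ring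
      rw [hid]
      refine le_trans (abs_add_le _ _) ?_
      have h2 : |(1/2 : ℝ) * ((∑ e : ↥(S l), Real.log (1 / a l e)) - (l:ℝ) * A l)|
          ≤ (1/2) * ((n:ℝ) * (D₁ * Real.log l + D₂)) := by
        rw [abs_mul, abs_of_nonneg (by norm_num : (0:ℝ) ≤ 1/2)]
        exact mul_le_mul_of_nonneg_left habs (by norm_num)
      linarith [hlog]
    -- bound by c * l^d * (β₁ + β₂ log l)
    have hn_le : (n:ℝ) ≤ c * (l:ℝ)^d := by
      have : n = (S l).ncard := by
        rw [hndef, ← Nat.card_eq_fintype_card, Nat.card_coe_set_eq]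
      rw [this]
      exact hncard l hl
    have hlogl : 0 ≤ Real.log l := Real.log_nonneg hlR
    have hclpos : (0:ℝ) < c * (l:ℝ)^d := by positivity
    have hDnn : 0 ≤ D₁ * Real.log l + D₂ := by positivity
    have h3 : (n:ℝ) * Real.log n ≤ (c * (l:ℝ)^d) * (Real.log c + d * Real.log l) := by
      rcases Nat.eq_zero_or_pos n with h | h
      · rw [h]
        simp only [Nat.cast_zero, zero_mul]
        exact mul_nonneg hclpos.le (add_nonneg hlogc (mul_nonneg (Nat.cast_nonneg d) hlogl))
      · have hn1 : (1:ℝ) ≤ (n:ℝ) := by exact_mod_cast h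
        have hlogsplit : Real.log (c * (l:ℝ)^d) = Real.log c + d * Real.log l := by
          rw [Real.log_mul (by linarith) (by positivity), Real.log_pow, Real.log_pow]
        have hlogle : Real.log n ≤ Real.log c + d * Real.log l := by
          rw [← hlogsplit]
          exact Real.log_le_log (by linarith) hn_le
        exact mul_le_mul hn_le hlogle (Real.log_nonneg hn1) hclpos.le
    have h1 : (n:ℝ) * Real.log 3 ≤ (c * (l:ℝ)^d) * Real.log 3 :=
      mul_le_mul_of_nonneg_right hn_le hlog3
    have h2 : (n:ℝ) * (D₁ * Real.log l + D₂) ≤ (c * (l:ℝ)^d) * (D₁ * Real.log l + D₂) :=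
      mul_le_mul_of_nonneg_right hn_le hDnn
    have hE : (n:ℝ) * Real.log 3 + ((n:ℝ)/2) * Real.log n
          + (1/2) * ((n:ℝ) * (D₁ * Real.log l + D₂))
        ≤ (c * (l:ℝ)^d) * (β₁ + β₂ * Real.log l) := by
      rw [hβ₁def, hβ₂def]
      nlinarith [h1, h2, h3]
    -- put everything together
    have hld1 : (0:ℝ) < (l:ℝ)^(d+1) := by positivity
    have hfl : f l = L / (l:ℝ)^(d+1) := by
      rw [hfdef, hLdef]
      simp only []
      rw [hcardEq]
    have hul : u l = ((1/2) * ((l:ℝ) * A l)) / (l:ℝ)^(d+1) := by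
      rw [hudef]
      simp only []
      rw [pow_succ]
      field_simp
    rw [Real.norm_eq_abs, hfl, hul, div_sub_div_same, abs_div, abs_of_pos hld1]
    calc |L - (1/2) * ((l:ℝ) * A l)| / (l:ℝ)^(d+1)
        ≤ ((c * (l:ℝ)^d) * (β₁ + β₂ * Real.log l)) / (l:ℝ)^(d+1) :=
          (div_le_div_iff_of_pos_right hld1).mpr (le_trans hcomb hE)
      _ = b l := by
          rw [hbdef]
          simp only []
          rw [pow_succ]
          have hldne : ((l:ℝ)^d) ≠ 0 := by positivity
          field_simp
  -- limit of b
  have hb0 : Tendsto b atTop (nhds 0) := by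
    have h1 : Tendsto (fun l : ℕ => 1/(l:ℝ)) atTop (nhds 0) := tendsto_one_div_atTop_nhds_zero_nat
    have h2' : Tendsto (fun x : ℝ => Real.log x / x) atTop (nhds 0) :=
      Real.isLittleO_log_id_atTop.tendsto_div_nhds_zero
    have h2 : Tendsto (fun l : ℕ => Real.log l / l) atTop (nhds 0) :=
      h2'.comp (tendsto_natCast_atTop_atTop (R := ℝ))
    have hbrw : b = fun l : ℕ => c * β₁ * (1/(l:ℝ)) + c * β₂ * (Real.log l / l) := by
      funext l
      rw [hbdef]
      ring
    rw [hbrw]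
    have := (h1.const_mul (c*β₁)).add (h2.const_mul (c*β₂))
    rw [mul_zero, mul_zero, add_zero] at this
    exact this
  have hzero : Tendsto (fun l => f l - u l) atTop (nhds 0) := squeeze_zero_norm' hfu hb0
  have hfinal := hu.add hzero
  rw [add_zero] at hfinal
  have hfeq : (fun l => u l + (f l - u l)) = f := by funext l; ring
  rw [hfeq] at hfinal
  exact hfinal
end

section
/- Let d ≥ 1 and l ≥ 1 be integers, and let P ∈ ℤ[X₀,…,X_d] be a nonzero homogeneous polynomial of degree l with integer coefficients such that |P(x₀,…,x_d)| ≤ max(|x₀|,…,|x_d|)^l for all (x₀,…,x_d) ∈ ℂ^{d+1}. Then there exists a multi-index ν ∈ ℕ^{d+1} with |ν| = l such that P = X^ν or P = −X^ν. -/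
open Complex MvPolynomial Finset

private lemma aux_geom_sum_zero {N : ℕ} {w : ℂ} (hw1 : w ≠ 1) (hwN : w ^ N = 1) :
    ∑ k ∈ Finset.range N, w ^ k = 0 := by
  rw [geom_sum_eq hw1, hwN]; simp

/-- An integer homogeneous polynomial of degree `l` in `d+1` variables whose modulus is
bounded by `max(|x₀|,…,|x_d|)^l` on all of `ℂ^{d+1}` is `±` a monomial of degree `l`. -/
theorem homogeneous_int_poly_bounded_is_pm_monomial
    {d l : ℕ} (hd : 1 ≤ d) (hl : 1 ≤ l)
    (P : MvPolynomial (Fin (d + 1)) ℤ) (hP : P ≠ 0)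
    (hhom : P.IsHomogeneous l)
    (hbound : ∀ x : Fin (d + 1) → ℂ,
      ‖MvPolynomial.eval x (P.map (Int.castRingHom ℂ))‖ ≤
        (Finset.univ.sup' Finset.univ_nonempty fun i => ‖x i‖) ^ l) :
    ∃ ν : Fin (d + 1) →₀ ℕ, (∑ i, ν i) = l ∧
      (P = MvPolynomial.monomial ν 1 ∨ P = MvPolynomial.monomial ν (-1)) := by
  classical
  set N : ℕ := l + 1 with hNdef
  have hN0 : (N : ℕ) ≠ 0 := by omega
  set ζ : ℂ := Complex.exp (2 * Real.pi * I / N) with hζdef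
  have hprim : IsPrimitiveRoot ζ N := Complex.isPrimitiveRoot_exp N hN0
  have hζ0 : ζ ≠ 0 := Complex.exp_ne_zero _
  have hζabs : ‖ζ‖ = 1 := by
    rw [hζdef, Complex.norm_exp]
    norm_num [Complex.div_re, Complex.normSq]
  have hconjζ : (starRingEnd ℂ) ζ = ζ⁻¹ := (Complex.inv_eq_conj hζabs).symm
  have hζN : ζ ^ N = 1 := hprim.pow_eq_one
  -- degree bound on exponents in the support
  have hdeg : ∀ ν ∈ P.support, (∑ i, ν i) = l := by
    intro ν hν
    have h1 : ν.degree = l := by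
      by_contra hc
      exact (MvPolynomial.mem_support_iff.mp hν) (hhom.coeff_eq_zero hc)
    rw [← h1, Finsupp.degree]
    exact (Finset.sum_subset (Finset.subset_univ _)
      (by simp +contextual [Finsupp.notMem_support_iff])).symm
  have hlt : ∀ ν ∈ P.support, ∀ i, ν i < N := by
    intro ν hν i
    have : ν i ≤ ∑ j, ν j := Finset.single_le_sum (f := fun j => ν j) (by intros; positivity)
      (Finset.mem_univ i)
    rw [hdeg ν hν] at this; omega
  set s := P.support with hs
  set c : (Fin (d + 1) →₀ ℕ) → ℂ := fun ν => ((P.coeff ν : ℤ) : ℂ) with hc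
  set J : Finset (Fin (d + 1) → ℕ) := Fintype.piFinset (fun _ => Finset.range N) with hJ
  set E : (Fin (d + 1) → ℕ) → ℂ :=
    fun j => MvPolynomial.eval (fun i => ζ ^ (j i)) (P.map (Int.castRingHom ℂ)) with hE
  -- expansion of E
  have hEeq : ∀ j, E j = ∑ ν ∈ s, c ν * ∏ i, ζ ^ ((j i : ℤ) * ν i) := by
    intro j
    rw [hE]
    dsimp only
    rw [MvPolynomial.eval_map, MvPolynomial.eval₂_eq']
    refine Finset.sum_congr rfl fun ν _ => ?_
    congr 1
    refine Finset.prod_congr rfl fun i _ => ?_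
    rw [← pow_mul, ← zpow_natCast]
    norm_num
  have hconjE : ∀ j, (starRingEnd ℂ) (E j) =
      ∑ μ ∈ s, c μ * ∏ i, ζ ^ (-((j i : ℤ) * μ i)) := by
    intro j
    rw [hEeq j, map_sum]
    refine Finset.sum_congr rfl fun μ _ => ?_
    rw [map_mul, map_prod]
    congr 1
    · simp [hc]
    · refine Finset.prod_congr rfl fun i _ => ?_
      rw [map_zpow₀, hconjζ, inv_zpow, ← zpow_neg]
  -- the Parseval identity
  set A : ℤ := ∑ ν ∈ s, (P.coeff ν) ^ 2 with hA
  have key : ∀ ν ∈ s, ∀ μ ∈ s,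
      (∑ j ∈ J, ∏ i, ζ ^ ((j i : ℤ) * ν i - (j i : ℤ) * μ i)) =
        if ν = μ then ((N : ℂ)) ^ (d + 1) else 0 := by
    intro ν hν μ hμ
    have hrw : ∀ j : Fin (d+1) → ℕ, ∀ i,
        ζ ^ ((j i : ℤ) * ν i - (j i : ℤ) * μ i) = (ζ ^ ((ν i : ℤ) - (μ i : ℤ))) ^ (j i) := by
      intro j i
      rw [← zpow_natCast (ζ ^ ((ν i : ℤ) - (μ i : ℤ))), ← zpow_mul]
      ring_nf
    calc (∑ j ∈ J, ∏ i, ζ ^ ((j i : ℤ) * ν i - (j i : ℤ) * μ i))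
        = ∑ j ∈ J, ∏ i, (ζ ^ ((ν i : ℤ) - (μ i : ℤ))) ^ (j i) := by
          refine Finset.sum_congr rfl fun j _ => Finset.prod_congr rfl fun i _ => hrw j i
      _ = ∏ i, ∑ k ∈ Finset.range N, (ζ ^ ((ν i : ℤ) - (μ i : ℤ))) ^ k :=
          (Finset.prod_univ_sum _ _).symm
      _ = if ν = μ then ((N : ℂ)) ^ (d + 1) else 0 := by
          by_cases h : ν = μ
          · subst h
            simp [Finset.prod_const, Finset.card_univ]
          · have : ∃ i, ν i ≠ μ i := by
              by_contra hcon
              push_neg at hcon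
              exact h (Finsupp.ext hcon)
            obtain ⟨i₀, hi₀⟩ := this
            rw [if_neg h]
            refine Finset.prod_eq_zero (Finset.mem_univ i₀) ?_
            refine aux_geom_sum_zero ?_ ?_
            · intro hw
              have hdvd : (N : ℤ) ∣ ((ν i₀ : ℤ) - (μ i₀ : ℤ)) :=
                (hprim.zpow_eq_one_iff_dvd _).mp hw
              have h1 : ν i₀ < N := hlt ν hν i₀
              have h2 : μ i₀ < N := hlt μ hμ i₀
              have : ((ν i₀ : ℤ) - (μ i₀ : ℤ)) = 0 := by
                refine Int.eq_zero_of_abs_lt_dvd hdvd ?_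
                rw [abs_sub_lt_iff]
                constructor <;> [skip; skip] <;> push_cast <;> omega
              omega
            · rw [← zpow_natCast (ζ ^ ((ν i₀ : ℤ) - (μ i₀ : ℤ))), ← zpow_mul, mul_comm,
                zpow_mul, zpow_natCast, hζN, one_zpow]
  have hS : (∑ j ∈ J, E j * (starRingEnd ℂ) (E j)) = ((N : ℂ)) ^ (d + 1) * (A : ℂ) := by
    have step1 : ∀ j, E j * (starRingEnd ℂ) (E j) =
        ∑ ν ∈ s, ∑ μ ∈ s, c ν * c μ * ∏ i, ζ ^ ((j i : ℤ) * ν i - (j i : ℤ) * μ i) := by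
      intro j
      rw [hconjE j, hEeq j, Finset.sum_mul_sum]
      refine Finset.sum_congr rfl fun ν _ => Finset.sum_congr rfl fun μ _ => ?_
      rw [mul_mul_mul_comm, ← Finset.prod_mul_distrib]
      congr 1
      refine Finset.prod_congr rfl fun i _ => ?_
      rw [← zpow_add₀ hζ0]
      ring_nf
    calc (∑ j ∈ J, E j * (starRingEnd ℂ) (E j))
        = ∑ ν ∈ s, ∑ μ ∈ s, c ν * c μ *
            ∑ j ∈ J, ∏ i, ζ ^ ((j i : ℤ) * ν i - (j i : ℤ) * μ i) := by
          rw [Finset.sum_congr rfl fun j _ => step1 j]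
          rw [Finset.sum_comm]
          refine Finset.sum_congr rfl fun ν _ => ?_
          rw [Finset.sum_comm]
          refine Finset.sum_congr rfl fun μ _ => ?_
          rw [Finset.mul_sum]
      _ = ∑ ν ∈ s, c ν * c ν * ((N : ℂ)) ^ (d + 1) := by
          refine Finset.sum_congr rfl fun ν hν => ?_
          rw [Finset.sum_eq_single_of_mem ν hν]
          · rw [key ν hν ν hν, if_pos rfl]
          · intro μ hμ hne
            rw [key ν hν μ hμ, if_neg (Ne.symm hne), mul_zero]
      _ = ((N : ℂ)) ^ (d + 1) * (A : ℂ) := by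
          rw [hA]
          push_cast
          rw [Finset.mul_sum]
          refine Finset.sum_congr rfl fun ν _ => ?_
          simp [hc]; ring
  -- the bound side
  have hnorm : ∀ j ∈ J, Complex.normSq (E j) ≤ 1 := by
    intro j _
    have hx : (Finset.univ.sup' Finset.univ_nonempty
        fun i => ‖(fun i => ζ ^ (j i)) i‖) = 1 := by
      have : (fun i : Fin (d+1) => ‖ζ ^ (j i)‖) = fun _ => 1 := by
        funext i; rw [norm_pow, hζabs, one_pow]
      rw [this, Finset.sup'_const]
    have := hbound (fun i => ζ ^ (j i))
    rw [hx, one_pow] at this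
    rw [Complex.normSq_eq_norm_sq]
    exact pow_le_one₀ (norm_nonneg _) this
  have hreal : ((N : ℝ)) ^ (d + 1) * (A : ℝ) = ∑ j ∈ J, Complex.normSq (E j) := by
    have hcast : (((∑ j ∈ J, Complex.normSq (E j)) : ℝ) : ℂ) = ((N : ℂ)) ^ (d + 1) * (A : ℂ) := by
      rw [← hS]
      push_cast
      refine Finset.sum_congr rfl fun j _ => ?_
      rw [Complex.mul_conj]
    apply Complex.ofReal_injective
    rw [hcast]
    push_cast
    ring
  have hsum_le : (∑ j ∈ J, Complex.normSq (E j)) ≤ ((N : ℝ)) ^ (d + 1) := by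
    calc (∑ j ∈ J, Complex.normSq (E j)) ≤ ∑ _j ∈ J, (1 : ℝ) := Finset.sum_le_sum hnorm
      _ = (J.card : ℝ) := by rw [Finset.sum_const, nsmul_eq_mul, mul_one]
      _ = ((N : ℝ)) ^ (d + 1) := by
          rw [hJ, Fintype.card_piFinset]
          simp [Finset.card_range]
  have hA1 : A ≤ 1 := by
    have hNpos : (0 : ℝ) < ((N : ℝ)) ^ (d + 1) := by positivity
    have : ((N : ℝ)) ^ (d + 1) * (A : ℝ) ≤ ((N : ℝ)) ^ (d + 1) * 1 := by
      rw [mul_one, hreal]; exact hsum_le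
    have := le_of_mul_le_mul_left this hNpos
    exact_mod_cast this
  -- endgame
  have hsne : s.Nonempty := by
    rw [hs, Finset.nonempty_iff_ne_empty]
    intro hcon
    exact hP (MvPolynomial.support_eq_empty.mp hcon)
  have hterms : ∀ ν ∈ s, 1 ≤ (P.coeff ν) ^ 2 := by
    intro ν hν
    have : P.coeff ν ≠ 0 := MvPolynomial.mem_support_iff.mp hν
    have : 1 ≤ |P.coeff ν| := Int.one_le_abs this
    nlinarith [sq_abs (P.coeff ν)]
  obtain ⟨ν, hν⟩ := hsne
  have hcard : s.card = 1 := by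
    have h1 : (s.card : ℤ) • (1 : ℤ) ≤ A := Finset.card_nsmul_le_sum s _ 1 hterms
    have h2 : 1 ≤ s.card := Finset.card_pos.mpr ⟨ν, hν⟩
    simp only [smul_eq_mul, mul_one] at h1
    omega
  have hssing : s = {ν} := Finset.eq_singleton_iff_unique_mem.mpr
    ⟨hν, fun μ hμ => by
      by_contra hne
      have : ({μ, ν} : Finset _) ⊆ s := by
        intro x hx; simp at hx; rcases hx with h | h <;> [exact h ▸ hμ; exact h ▸ hν]
      have := Finset.card_le_card this
      rw [Finset.card_pair hne, hcard] at this
      omega⟩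
  have hAval : A = (P.coeff ν) ^ 2 := by rw [hA, hssing, Finset.sum_singleton]
  have hsq : (P.coeff ν) ^ 2 = 1 := le_antisymm (hAval ▸ hA1) (hterms ν hν)
  have hcoeff : P.coeff ν = 1 ∨ P.coeff ν = -1 := by
    have : IsUnit (P.coeff ν) := IsUnit.of_mul_eq_one _ (by rw [← sq]; exact hsq)
    exact Int.isUnit_iff.mp this
  refine ⟨ν, hdeg ν hν, ?_⟩
  have hPmono : P = MvPolynomial.monomial ν (P.coeff ν) := by
    ext μ
    rw [MvPolynomial.coeff_monomial]
    by_cases h : ν = μ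
    · rw [if_pos h, h]
    · rw [if_neg h]
      by_contra hne
      have : μ ∈ s := MvPolynomial.mem_support_iff.mpr hne
      rw [hssing, Finset.mem_singleton] at this
      exact h this.symm
  rcases hcoeff with h | h
  · left; rw [hPmono, h]
  · right; rw [hPmono, h]
end

section
/- Let P ∈ ℤ[X₁,…,X_d] be a nonzero polynomial with integer coefficients in d variables such that |P(z₁,…,z_d)| ≤ 1 for all (z₁,…,z_d) ∈ ℂ^d with |z₁| = ⋯ = |z_d| = 1. Then there exists a multi-index ν ∈ ℕ^d such that P = X^ν or P = −X^ν. -/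
open Complex Finset

lemma geom_aux {N : ℕ} (hN : 0 < N) {m : ℤ} (hm : ¬ (N:ℤ) ∣ m) :
    ∑ k ∈ Finset.range N, (Complex.exp (2*Real.pi*Complex.I/N) ^ m) ^ k = 0 := by
  have hζ := Complex.isPrimitiveRoot_exp N hN.ne'
  have hne : Complex.exp (2*Real.pi*Complex.I/N) ^ m ≠ 1 := fun h =>
    hm ((hζ.zpow_eq_one_iff_dvd m).mp h)
  have hpow : (Complex.exp (2*Real.pi*Complex.I/N) ^ m) ^ N = 1 := by
    rw [← zpow_natCast (Complex.exp (2*Real.pi*Complex.I/N) ^ m) N, ← zpow_mul, mul_comm m (N:ℤ),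
      zpow_mul, zpow_natCast, hζ.pow_eq_one, one_zpow]
  rw [geom_sum_eq hne, hpow, sub_self, zero_div]

lemma coord_sum {N : ℕ} (hN : 0 < N) (e : ℤ) (he : e.natAbs < N) :
    ∑ j : Fin N, (Complex.exp (2*Real.pi*Complex.I/N) ^ e) ^ (j : ℕ) =
      if e = 0 then (N : ℂ) else 0 := by
  rw [Fin.sum_univ_eq_sum_range (fun j => (Complex.exp (2*Real.pi*Complex.I/N) ^ e) ^ j) N]
  split_ifs with h
  · subst h; simp
  · apply geom_aux hN
    intro hdvd
    have h1 : N ∣ e.natAbs := Int.natAbs_dvd_natAbs.mpr (by simpa using hdvd)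
    have h2 : 0 < e.natAbs := Int.natAbs_pos.mpr h
    exact absurd (Nat.le_of_dvd h2 h1) (not_le.mpr he)

lemma pair_sum {d N : ℕ} (hN : 0 < N) (a b : Fin d →₀ ℕ)
    (ha : ∀ i, a i < N) (hb : ∀ i, b i < N) :
    ∑ k : Fin d → Fin N,
      ∏ i, (Complex.exp (2*Real.pi*Complex.I/N) ^ ((a i : ℤ) - (b i : ℤ))) ^ ((k i : ℕ)) =
      if a = b then (N:ℂ)^d else 0 := by
  rw [← Fintype.piFinset_univ, ← Finset.prod_univ_sum (fun _ : Fin d => (Finset.univ : Finset (Fin N)))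
    (fun i (j : Fin N) => (Complex.exp (2*Real.pi*Complex.I/N) ^ ((a i : ℤ) - (b i : ℤ))) ^ ((j : ℕ)))]
  have hcoord : ∀ i, ∑ j : Fin N,
      (Complex.exp (2*Real.pi*Complex.I/N) ^ ((a i : ℤ) - (b i : ℤ))) ^ ((j : ℕ)) =
      if (a i : ℤ) - b i = 0 then (N : ℂ) else 0 := fun i =>
    coord_sum hN _ (by
      have h1 := ha i; have h2 := hb i
      omega)
  simp only [hcoord]
  split_ifs with h
  · subst h; simp
  · obtain ⟨i, hi⟩ : ∃ i, a i ≠ b i := by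
      by_contra hc; push_neg at hc; exact h (Finsupp.ext hc)
    refine Finset.prod_eq_zero (Finset.mem_univ i) ?_
    rw [if_neg]; omega

lemma fact1 {ζ : ℂ} (hζ : ζ ≠ 0) (p q n : ℕ) :
    (ζ ^ n) ^ p * ((ζ⁻¹) ^ n) ^ q = (ζ ^ ((p:ℤ) - q)) ^ n := by
  rw [← pow_mul, ← pow_mul, inv_pow, ← zpow_natCast ζ (n*p), ← zpow_natCast ζ (n*q),
    ← zpow_neg, ← zpow_add₀ hζ, ← zpow_natCast (ζ ^ ((p:ℤ) - q)) n, ← zpow_mul]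
  congr 1; push_cast; ring

lemma one_le_sq_int {c : ℤ} (h : c ≠ 0) : 1 ≤ c^2 := by
  nlinarith [Int.one_le_abs h, _root_.sq_abs c]

/-- An integer polynomial in `d` variables whose modulus is bounded by `1` on the unit
torus `(S¹)^d` is `±` a monomial. -/
theorem int_poly_bounded_on_torus_is_pm_monomial
    {d : ℕ} (P : MvPolynomial (Fin d) ℤ) (hP : P ≠ 0)
    (hbound : ∀ z : Fin d → ℂ, (∀ i, ‖z i‖ = 1) →
      ‖MvPolynomial.eval z (P.map (Int.castRingHom ℂ))‖ ≤ 1) :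
    ∃ ν : Fin d →₀ ℕ,
      P = MvPolynomial.monomial ν 1 ∨ P = MvPolynomial.monomial ν (-1) := by
  classical
  set Q : MvPolynomial (Fin d) ℂ := P.map (Int.castRingHom ℂ) with hQdef
  set N : ℕ := 1 + P.support.sup (fun a => Finset.univ.sup fun i => a i) with hNdef
  have hN : 0 < N := by omega
  have hlt : ∀ a ∈ P.support, ∀ i, a i < N := by
    intro a ha i
    have h1 : a i ≤ Finset.univ.sup (fun i => a i) := Finset.le_sup (Finset.mem_univ i)
    have h2 : Finset.univ.sup (fun i => a i)
        ≤ P.support.sup (fun a => Finset.univ.sup fun i => a i) :=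
      Finset.le_sup (f := fun a => Finset.univ.sup fun i => a i) ha
    omega
  set ζ : ℂ := Complex.exp (2*Real.pi*Complex.I/N) with hζdef
  have hζprim : IsPrimitiveRoot ζ N := Complex.isPrimitiveRoot_exp N hN.ne'
  have hζ0 : ζ ≠ 0 := Complex.exp_ne_zero _
  have habs : ‖ζ‖ = 1 := by
    exact hζprim.norm'_eq_one hN.ne'
  set z : (Fin d → Fin N) → Fin d → ℂ := fun k i => ζ ^ (k i : ℕ) with hzdef
  have habsz : ∀ k i, ‖z k i‖ = 1 := by
    intro k i; simp [hzdef, map_pow, habs]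
  have hQsupp : Q.support = P.support :=
    MvPolynomial.support_map_of_injective P (by exact_mod_cast Int.cast_injective)
  have hQcoeff : ∀ a, Q.coeff a = ((P.coeff a : ℤ) : ℂ) := fun a => MvPolynomial.coeff_map _ P a
  have hEk : ∀ k : Fin d → Fin N, (Complex.normSq (MvPolynomial.eval (z k) Q) : ℂ)
      = ∑ a ∈ P.support, ∑ b ∈ P.support,
          ((P.coeff a : ℤ) : ℂ) * ((P.coeff b : ℤ) : ℂ) * ∏ i, (ζ ^ ((a i : ℤ) - (b i : ℤ))) ^ (k i : ℕ) := by
    intro k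
    rw [← Complex.mul_conj]
    rw [MvPolynomial.eval_eq', map_sum, Finset.sum_mul_sum, hQsupp]
    refine Finset.sum_congr rfl fun a ha => Finset.sum_congr rfl fun b hb => ?_
    rw [map_mul, map_prod, hQcoeff a, hQcoeff b, map_intCast]
    rw [mul_mul_mul_comm, ← Finset.prod_mul_distrib]
    congr 1
    refine Finset.prod_congr rfl fun i _ => ?_
    rw [map_pow, map_pow, ← Complex.inv_eq_conj habs]
    exact fact1 hζ0 (a i) (b i) (k i : ℕ)
  have key : ∑ k : Fin d → Fin N, (Complex.normSq (MvPolynomial.eval (z k) Q) : ℂ)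
      = (N:ℂ)^d * ∑ a ∈ P.support, ((P.coeff a : ℤ) : ℂ)^2 := by
    simp only [hEk]
    rw [Finset.sum_comm]
    have hswap : ∀ a ∈ P.support, ∑ k : Fin d → Fin N, ∑ b ∈ P.support,
        ((P.coeff a : ℤ) : ℂ) * ((P.coeff b : ℤ) : ℂ) * ∏ i, (ζ ^ ((a i : ℤ) - (b i : ℤ))) ^ (k i : ℕ)
        = ((P.coeff a : ℤ) : ℂ)^2 * (N:ℂ)^d := by
      intro a ha
      rw [Finset.sum_comm]
      have hb : ∀ b ∈ P.support, ∑ k : Fin d → Fin N,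
          ((P.coeff a : ℤ) : ℂ) * ((P.coeff b : ℤ) : ℂ) * ∏ i, (ζ ^ ((a i : ℤ) - (b i : ℤ))) ^ (k i : ℕ)
          = ((P.coeff a : ℤ) : ℂ) * ((P.coeff b : ℤ) : ℂ) * (if a = b then (N:ℂ)^d else 0) := by
        intro b hb
        rw [← Finset.mul_sum, pair_sum hN a b (hlt a ha) (hlt b hb)]
      rw [Finset.sum_congr rfl hb]
      rw [Finset.sum_eq_single_of_mem a ha (fun b _ hba => by
        rw [if_neg (fun h => hba h.symm), mul_zero])]
      rw [if_pos rfl, _root_.sq]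
    rw [Finset.sum_congr rfl hswap, ← Finset.sum_mul, mul_comm]
  -- real inequality
  have hT : ∑ a ∈ P.support, (((P.coeff a : ℤ) : ℝ))^2 ≤ 1 := by
    have hle : ∑ k : Fin d → Fin N, Complex.normSq (MvPolynomial.eval (z k) Q) ≤ (N:ℝ)^d := by
      calc ∑ k : Fin d → Fin N, Complex.normSq (MvPolynomial.eval (z k) Q)
          ≤ ∑ _k : Fin d → Fin N, (1:ℝ) := by
            refine Finset.sum_le_sum fun k _ => ?_
            have h1 := hbound (z k) (habsz k)
            rw [← Complex.sq_norm]
            nlinarith [norm_nonneg (MvPolynomial.eval (z k) Q)]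
        _ = (N:ℝ)^d := by simp
    have hEqR : ∑ k : Fin d → Fin N, Complex.normSq (MvPolynomial.eval (z k) Q)
        = (N:ℝ)^d * ∑ a ∈ P.support, (((P.coeff a : ℤ) : ℝ))^2 := by
      apply Complex.ofReal_injective
      push_cast
      rw [key]
    have hNd : (0:ℝ) < (N:ℝ)^d := by positivity
    rw [hEqR] at hle
    have := le_of_mul_le_mul_left (by linarith : (N:ℝ)^d * (∑ a ∈ P.support, (((P.coeff a : ℤ) : ℝ))^2) ≤ (N:ℝ)^d * 1) hNd
    linarith
  -- integrality
  have hcard1 : P.support.card = 1 := by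
    have hge : (P.support.card : ℝ) ≤ ∑ a ∈ P.support, (((P.coeff a : ℤ) : ℝ))^2 := by
      calc (P.support.card : ℝ) = ∑ _a ∈ P.support, (1:ℝ) := by
            rw [Finset.sum_const, nsmul_eq_mul, mul_one]
        _ ≤ _ := by
            refine Finset.sum_le_sum fun a ha => ?_
            have h0 : P.coeff a ≠ 0 := MvPolynomial.mem_support_iff.mp ha
            exact_mod_cast one_le_sq_int h0
    have hle1 : P.support.card ≤ 1 := by exact_mod_cast le_trans hge hT
    have hpos : 0 < P.support.card :=
      Finset.card_pos.mpr (MvPolynomial.support_nonempty.mpr hP)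
    omega
  obtain ⟨ν, hν⟩ := Finset.card_eq_one.mp hcard1
  refine ⟨ν, ?_⟩
  have hPsum : P = MvPolynomial.monomial ν (P.coeff ν) := by
    conv_lhs => rw [← MvPolynomial.support_sum_monomial_coeff P]
    rw [hν, Finset.sum_singleton]
  have hc0 : P.coeff ν ≠ 0 :=
    MvPolynomial.mem_support_iff.mp (hν ▸ Finset.mem_singleton_self ν)
  have hc2 : (P.coeff ν)^2 ≤ 1 := by
    rw [hν, Finset.sum_singleton] at hT
    exact_mod_cast hT
  have hsq : (P.coeff ν)^2 = 1 := le_antisymm hc2 (one_le_sq_int hc0)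
  rcases Int.eq_one_or_neg_one_of_mul_eq_one (v := P.coeff ν) (by rw [← _root_.sq]; exact hsq) with h | h
  · left; rw [hPsum, h]
  · right; rw [hPsum, h]
end
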